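/- Let p₁, p₂ ∈ [1,∞] with 1/p₁ + 1/p₂ ≥ 1 and define s ∈ [1,∞] by 1/s = 1/p₁ + 1/p₂ − 1. For h ∈ L_{p₁}(r) and g ∈ L_{p₂}(r), the convolution (h * g)(x) := ∫_a^b (T^y h)(x) g(y) r(y) dy is well defined for almost every x, and the Young inequality ‖h * g‖_s ≤ ‖h‖_{p₁}·‖g‖_{p₂} holds; consequently (h,g) ↦ h*g is a continuous bilinear operator from L_{p₁}(r) × L_{p₂}(r) into L_s(r). -/

import Mathlib

open MeasureTheory Filter Topology
open scoped ENNReal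

private lemma s19_iSup_rpow {f : ℕ → ℝ≥0∞} (hf : Monotone f) {c : ℝ} (hc : 0 ≤ c) :
    (⨆ n, f n) ^ c = ⨆ n, f n ^ c := by
  have h1 : Tendsto f atTop (𝓝 (⨆ n, f n)) := tendsto_atTop_iSup hf
  have h2 : Tendsto (fun n => f n ^ c) atTop (𝓝 ((⨆ n, f n) ^ c)) :=
    (ENNReal.continuous_rpow_const.tendsto _).comp h1
  exact tendsto_nhds_unique h2
    (tendsto_atTop_iSup fun i j hij => ENNReal.rpow_le_rpow (hf hij) hc)

private lemma s19_sup_ofReal_min {c : ℝ} :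
    ⨆ n : ℕ, ENNReal.ofReal (min c n) = ENNReal.ofReal c := by
  refine le_antisymm (iSup_le fun n => ENNReal.ofReal_le_ofReal (min_le_left _ _)) ?_
  refine le_iSup_of_le ⌈c⌉₊ ?_
  rcases le_total c 0 with hc | hc
  · exact ENNReal.ofReal_le_ofReal (le_min le_rfl (hc.trans (Nat.cast_nonneg _)))
  · rw [min_eq_left (Nat.le_ceil c)]

private lemma s19_holder3 {X : Type*} [MeasurableSpace X] {μ : Measure X}
    {f₁ f₂ f₃ : X → ℝ≥0∞} (h1 : AEMeasurable f₁ μ) (h2 : AEMeasurable f₂ μ)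
    (h3 : AEMeasurable f₃ μ)
    {e₁ e₂ e₃ : ℝ} (he₁ : 0 ≤ e₁) (he₂ : 0 ≤ e₂) (he₃ : 0 ≤ e₃) (hsum : e₁ + e₂ + e₃ = 1) :
    ∫⁻ x, f₁ x ^ e₁ * f₂ x ^ e₂ * f₃ x ^ e₃ ∂μ ≤
      (∫⁻ x, f₁ x ∂μ) ^ e₁ * (∫⁻ x, f₂ x ∂μ) ^ e₂ * (∫⁻ x, f₃ x ∂μ) ^ e₃ := by
  have hmain := ENNReal.lintegral_prod_norm_pow_le (μ := μ) (Finset.univ : Finset (Fin 3))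
    (f := ![f₁, f₂, f₃]) (p := ![e₁, e₂, e₃])
    (by intro i _; fin_cases i <;> simpa)
    (by simp [Fin.sum_univ_three, hsum])
    (by intro i _; fin_cases i <;> simpa)
  simpa [Fin.prod_univ_three] using hmain

/-- **Young convolution inequality.** Let `1/p₁ + 1/p₂ ≥ 1` and
`1/s = 1/p₁ + 1/p₂ − 1`. For `h ∈ L_{p₁}(r)` and `g ∈ L_{p₂}(r)` the generalized convolution
`(h * g)(x) = ∫_a^b (T^y h)(x) g(y) r(y) dy` is well defined for a.e. `x` and
`‖h * g‖_s ≤ ‖h‖_{p₁}·‖g‖_{p₂}`. -/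
theorem stmt19
    (a : ℝ) (b : EReal) (hab : (a : EReal) < b)
    (I : Set ℝ) (hI : I = {x : ℝ | a < x ∧ (x : EReal) < b})
    (J : Set ℝ) (hJ : J = {x : ℝ | a ≤ x ∧ (x : EReal) < b})
    -- the weight r: positive and locally integrable on (a,b)
    (r : ℝ → ℝ) (hr : ∀ x ∈ I, 0 < r x)
    (hrloc : LocallyIntegrableOn r I)
    (Mr : Measure ℝ)
    (hMr : Mr = (volume.restrict I).withDensity fun x => ENNReal.ofReal (r x))
    -- the family ν_{x,y} of symmetric subprobability measures on [a,b)
    (ν : ℝ × ℝ → Measure ℝ)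
    (hνsub : ∀ x ∈ I, ∀ y ∈ I, ν (x, y) Set.univ ≤ 1)
    (hνsupp : ∀ x ∈ I, ∀ y ∈ I, ν (x, y) Jᶜ = 0)
    (hνsymm : ∀ x ∈ I, ∀ y ∈ I, ν (x, y) = ν (y, x))
    -- joint Borel measurability of (x,y) ↦ (T^y h)(x) for bounded or nonnegative Borel h
    (hmeasC : ∀ h : ℝ → ℂ, Measurable h → (∃ C : ℝ, ∀ ξ, ‖h ξ‖ ≤ C) →
        Measurable (fun q : ℝ × ℝ => ∫ ξ, h ξ ∂(ν q)))
    (hmeasR : ∀ h : ℝ → ℝ, Measurable h → (∀ ξ, 0 ≤ h ξ) →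
        Measurable (fun q : ℝ × ℝ => ∫ ξ, h ξ ∂(ν q)))
    -- the contraction property ‖T^y h‖_q ≤ ‖h‖_q for every q ∈ [1,∞], y ∈ (a,b), h ∈ L_q(r)
    (hcontr : ∀ q : ℝ≥0∞, 1 ≤ q → ∀ y ∈ I, ∀ h : ℝ → ℂ, Measurable h → h a = 0 →
        MemLp h q Mr →
        eLpNorm (fun x => ∫ ξ, h ξ ∂(ν (x, y))) q Mr ≤ eLpNorm h q Mr)
    -- exponents: 1/p₁ + 1/p₂ ≥ 1 and 1/s = 1/p₁ + 1/p₂ − 1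
    (p₁ p₂ s : ℝ≥0∞) (hp₁ : 1 ≤ p₁) (hp₂ : 1 ≤ p₂)
    (hs : p₁⁻¹ + p₂⁻¹ = s⁻¹ + 1)
    -- h ∈ L_{p₁}(r) and g ∈ L_{p₂}(r), extended to [a,b) by the value 0 at a
    (h : ℝ → ℂ) (hhm : Measurable h) (hha : h a = 0) (hh : MemLp h p₁ Mr)
    (g : ℝ → ℂ) (hgm : Measurable g) (hga : g a = 0) (hg : MemLp g p₂ Mr) :
    -- the convolution is well defined for a.e. x
    (∀ᵐ x ∂Mr, Integrable (fun y => (∫ ξ, h ξ ∂(ν (x, y))) * g y) Mr) ∧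
    -- Young's inequality ‖h * g‖_s ≤ ‖h‖_{p₁} ‖g‖_{p₂}
    eLpNorm (fun x => ∫ y, (∫ ξ, h ξ ∂(ν (x, y))) * g y ∂Mr) s Mr
      ≤ eLpNorm h p₁ Mr * eLpNorm g p₂ Mr := by
  clear hab hr hνsupp hJ hga hrloc
  -- basic setup
  have hImeas : MeasurableSet I := by
    rw [hI]
    exact (measurableSet_Ioi (a := a)).inter
      (measurable_coe_real_ereal (measurableSet_Iio (a := b)))
  haveI : SFinite Mr := by rw [hMr]; infer_instance
  have hIco : Mr Iᶜ = 0 := by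
    rw [hMr, withDensity_apply _ hImeas.compl, Measure.restrict_restrict hImeas.compl,
      Set.compl_inter_self, Measure.restrict_empty, lintegral_zero_measure]
  have hIae : ∀ᵐ x ∂Mr, x ∈ I := by
    rw [ae_iff]
    exact hIco
  set A := eLpNorm h p₁ Mr with hAdef
  set Bg := eLpNorm g p₂ Mr with hBdef
  have hA : A < ∞ := hh.2
  have hB : Bg < ∞ := hg.2
  have hp₁0 : p₁ ≠ 0 := (zero_lt_one.trans_le hp₁).ne'
  have hp₂0 : p₂ ≠ 0 := (zero_lt_one.trans_le hp₂).ne'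
  have hs1 : 1 ≤ s := by
    have h1 : s⁻¹ + 1 ≤ 1 + 1 := by
      rw [← hs]; exact add_le_add (ENNReal.inv_le_one.2 hp₁) (ENNReal.inv_le_one.2 hp₂)
    have h2 : s⁻¹ ≤ 1 := (ENNReal.add_le_add_iff_right ENNReal.one_ne_top).1 h1
    exact ENNReal.inv_le_one.1 h2
  have hs0 : s ≠ 0 := (zero_lt_one.trans_le hs1).ne'
  -- truncations of ‖h‖
  set rn : ℕ → ℝ → ℝ := fun n ξ => min ‖h ξ‖ n with hrndef
  have hrnm : ∀ n, Measurable (rn n) := fun n => hhm.norm.min measurable_const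
  have hrnn : ∀ n ξ, 0 ≤ rn n ξ := fun n ξ => le_min (norm_nonneg _) (Nat.cast_nonneg n)
  have hrnh : ∀ n ξ, rn n ξ ≤ ‖h ξ‖ := fun n ξ => min_le_left _ _
  set Kn : ℕ → ℝ × ℝ → ℝ≥0∞ := fun n q => ENNReal.ofReal (∫ ξ, rn n ξ ∂(ν q)) with hKndef
  have hKnm : ∀ n, Measurable (Kn n) := fun n =>
    (hmeasR (rn n) (hrnm n) (hrnn n)).ennreal_ofReal
  set 𝒦 : ℝ × ℝ → ℝ≥0∞ := fun q => ⨆ n, Kn n q with h𝒦def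
  have h𝒦m : Measurable 𝒦 := Measurable.iSup hKnm
  have hνfin : ∀ x ∈ I, ∀ y ∈ I, IsFiniteMeasure (ν (x, y)) := fun x hx y hy =>
    ⟨lt_of_le_of_lt (hνsub x hx y hy) ENNReal.one_lt_top⟩
  have hrnint : ∀ n, ∀ x ∈ I, ∀ y ∈ I, Integrable (rn n) (ν (x, y)) := by
    intro n x hx y hy
    haveI := hνfin x hx y hy
    refine (integrable_const (n : ℝ)).mono' (hrnm n).aestronglyMeasurable ?_
    refine ae_of_all _ fun ξ => ?_
    rw [Real.norm_of_nonneg (hrnn n ξ)]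
    exact min_le_right _ _
  have hKnmono : ∀ x ∈ I, ∀ y ∈ I, Monotone fun n => Kn n (x, y) := by
    intro x hx y hy n m hnm
    exact ENNReal.ofReal_le_ofReal (integral_mono (hrnint n x hx y hy) (hrnint m x hx y hy)
      fun ξ => min_le_min le_rfl (Nat.cast_le.2 hnm))
  -- F1 : on I × I, 𝒦 is the kernel integral of ‖h‖
  have hKeq : ∀ x ∈ I, ∀ y ∈ I, 𝒦 (x, y) = ∫⁻ ξ, (‖h ξ‖₊ : ℝ≥0∞) ∂(ν (x, y)) := by
    intro x hx y hy
    have h1 : ∀ n, Kn n (x, y) = ∫⁻ ξ, ENNReal.ofReal (rn n ξ) ∂(ν (x, y)) := fun n =>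
      ofReal_integral_eq_lintegral_ofReal (hrnint n x hx y hy) (ae_of_all _ (hrnn n))
    calc 𝒦 (x, y) = ⨆ n, ∫⁻ ξ, ENNReal.ofReal (rn n ξ) ∂(ν (x, y)) := by
          simp only [h𝒦def, h1]
      _ = ∫⁻ ξ, ⨆ n, ENNReal.ofReal (rn n ξ) ∂(ν (x, y)) :=
          (lintegral_iSup (fun n => (hrnm n).ennreal_ofReal)
            (fun n m hnm ξ => ENNReal.ofReal_le_ofReal
              (min_le_min le_rfl (Nat.cast_le.2 hnm)))).symm
      _ = ∫⁻ ξ, (‖h ξ‖₊ : ℝ≥0∞) ∂(ν (x, y)) := by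
          refine lintegral_congr fun ξ => ?_
          rw [hrndef]
          simp only []
          rw [s19_sup_ofReal_min]; exact ofReal_norm _
  -- symmetry of 𝒦 on I × I
  have hKsymm : ∀ x ∈ I, ∀ y ∈ I, 𝒦 (x, y) = 𝒦 (y, x) := by
    intro x hx y hy
    simp only [h𝒦def, hKndef, hνsymm x hx y hy]
  -- F3 : domination of the vector integral
  have hdom : ∀ x ∈ I, ∀ y ∈ I, (‖∫ ξ, h ξ ∂(ν (x, y))‖₊ : ℝ≥0∞) ≤ 𝒦 (x, y) := by
    intro x hx y hy
    rw [hKeq x hx y hy]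
    exact enorm_integral_le_lintegral_enorm _
  -- F4 : norm identity for truncations
  have hKnnorm : ∀ (n : ℕ) (q : ℝ × ℝ),
      (‖∫ ξ, ((rn n ξ : ℝ) : ℂ) ∂(ν q)‖₊ : ℝ≥0∞) = Kn n q := by
    intro n q
    have hio : ∫ ξ, ((rn n ξ : ℝ) : ℂ) ∂(ν q) = ((∫ ξ, rn n ξ ∂(ν q) : ℝ) : ℂ) :=
      integral_ofReal
    rw [hio, Complex.nnnorm_real]
    exact Real.enorm_eq_ofReal (integral_nonneg (fun ξ => hrnn n ξ))
  -- contraction for truncations at exponent p₁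
  have hrc : ∀ n : ℕ, Measurable fun ξ => ((rn n ξ : ℝ) : ℂ) := fun n =>
    Complex.measurable_ofReal.comp (hrnm n)
  have hcontrn : ∀ (n : ℕ), ∀ y ∈ I,
      eLpNorm (fun x => ∫ ξ, ((rn n ξ : ℝ) : ℂ) ∂(ν (x, y))) p₁ Mr ≤ A := by
    intro n y hy
    have hbnd : ∀ ξ, ‖((rn n ξ : ℝ) : ℂ)‖ ≤ ‖h ξ‖ := fun ξ => by
      rw [Complex.norm_real, Real.norm_of_nonneg (hrnn n ξ)]; exact hrnh n ξ
    have hmem : MemLp (fun ξ => ((rn n ξ : ℝ) : ℂ)) p₁ Mr :=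
      hh.of_le (hrc n).aestronglyMeasurable (ae_of_all _ hbnd)
    have ha0 : ((rn n a : ℝ) : ℂ) = 0 := by
      have : rn n a = 0 := by
        rw [hrndef]; simp only []
        rw [hha, norm_zero]
        exact min_eq_left (Nat.cast_nonneg n)
      rw [this, Complex.ofReal_zero]
    refine le_trans (hcontr p₁ hp₁ y hy _ (hrc n) ha0 hmem) ?_
    exact eLpNorm_mono hbnd
  -- column bound, finite exponent
  have colFin : p₁ ≠ ∞ → ∀ y ∈ I,
      ∫⁻ x, 𝒦 (x, y) ^ p₁.toReal ∂Mr ≤ A ^ p₁.toReal := by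
    intro hp₁t y hy
    have hP0 : p₁.toReal ≠ 0 := ENNReal.toReal_ne_zero.2 ⟨hp₁0, hp₁t⟩
    have hPnn : (0:ℝ) ≤ p₁.toReal := ENNReal.toReal_nonneg
    have step : ∀ n, ∫⁻ x, Kn n (x, y) ^ p₁.toReal ∂Mr ≤ A ^ p₁.toReal := by
      intro n
      have hc := hcontrn n y hy
      rw [eLpNorm_eq_lintegral_rpow_enorm_toReal hp₁0 hp₁t] at hc
      have hK' : ∀ x, ‖∫ ξ, ((rn n ξ : ℝ) : ℂ) ∂(ν (x, y))‖ₑ = Kn n (x, y) :=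
        fun x => hKnnorm n (x, y)
      simp only [hK'] at hc
      have := ENNReal.rpow_le_rpow hc hPnn
      rwa [← ENNReal.rpow_mul, one_div, inv_mul_cancel₀ hP0, ENNReal.rpow_one] at this
    have hmono : ∀ᵐ x ∂Mr, Monotone fun n => Kn n (x, y) := by
      filter_upwards [hIae] with x hx using hKnmono x hx y hy
    have hEq : ∫⁻ x, 𝒦 (x, y) ^ p₁.toReal ∂Mr
        = ⨆ n, ∫⁻ x, Kn n (x, y) ^ p₁.toReal ∂Mr := by
      have hswap := lintegral_iSup' (μ := Mr)
        (f := fun n x => Kn n (x, y) ^ p₁.toReal)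
        (fun n => (ENNReal.continuous_rpow_const.measurable.comp
          ((hKnm n).comp (measurable_id.prodMk measurable_const))).aemeasurable)
        (by filter_upwards [hmono] with x hx n m hnm using
          ENNReal.rpow_le_rpow (hx hnm) hPnn)
      rw [← hswap]
      refine lintegral_congr_ae ?_
      filter_upwards [hmono] with x hx
      exact s19_iSup_rpow hx hPnn
    rw [hEq]
    exact iSup_le step
  -- column bound, infinite exponent
  have colTop : p₁ = ∞ → ∀ y ∈ I, ∀ᵐ x ∂Mr, 𝒦 (x, y) ≤ A := by
    intro hp₁t y hy
    have hn' : ∀ n : ℕ, ∀ᵐ x ∂Mr, Kn n (x, y) ≤ A := by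
      intro n
      have hc := hcontrn n y hy
      rw [hp₁t, eLpNorm_exponent_top] at hc
      have h2 := ENNReal.ae_le_essSup
        (f := fun x => (‖∫ ξ, ((rn n ξ : ℝ) : ℂ) ∂(ν (x, y))‖₊ : ℝ≥0∞)) (μ := Mr)
      filter_upwards [h2] with x hx
      rw [← hKnnorm n (x, y)]
      exact le_trans hx hc
    rw [← ae_all_iff] at hn'
    filter_upwards [hn'] with x hx
    exact iSup_le hx
  -- row bounds via symmetry
  have rowFin : p₁ ≠ ∞ → ∀ x ∈ I,
      ∫⁻ y, 𝒦 (x, y) ^ p₁.toReal ∂Mr ≤ A ^ p₁.toReal := by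
    intro hp₁t x hx
    calc ∫⁻ y, 𝒦 (x, y) ^ p₁.toReal ∂Mr = ∫⁻ y, 𝒦 (y, x) ^ p₁.toReal ∂Mr := by
          refine lintegral_congr_ae ?_
          filter_upwards [hIae] with y hy
          rw [hKsymm x hx y hy]
      _ ≤ A ^ p₁.toReal := colFin hp₁t x hx
  have rowTop : p₁ = ∞ → ∀ x ∈ I, ∀ᵐ y ∂Mr, 𝒦 (x, y) ≤ A := by
    intro hp₁t x hx
    filter_upwards [colTop hp₁t x hx, hIae] with y h1 h2
    rw [hKsymm x hx y h2]
    exact h1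
  -- a.e. finiteness of the kernel on the product space
  have hKlt : ∀ᵐ q ∂(Mr.prod Mr), 𝒦 q < ∞ := by
    rw [Measure.ae_prod_iff_ae_ae (measurableSet_lt h𝒦m measurable_const)]
    by_cases hp₁t : p₁ = ∞
    · filter_upwards [hIae] with x hx
      filter_upwards [rowTop hp₁t x hx] with y hy
      exact lt_of_le_of_lt hy hA
    · have hPnn : (0:ℝ) ≤ p₁.toReal := ENNReal.toReal_nonneg
      have hP0 : p₁.toReal ≠ 0 := ENNReal.toReal_ne_zero.2 ⟨hp₁0, hp₁t⟩
      filter_upwards [hIae] with x hx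
      have hfin : ∫⁻ y, 𝒦 (x, y) ^ p₁.toReal ∂Mr ≠ ∞ :=
        (lt_of_le_of_lt (rowFin hp₁t x hx)
          (ENNReal.rpow_lt_top_of_nonneg hPnn hA.ne)).ne
      have haem : AEMeasurable (fun y => 𝒦 (x, y) ^ p₁.toReal) Mr :=
        (ENNReal.continuous_rpow_const.measurable.comp
          (h𝒦m.comp (measurable_const.prodMk measurable_id))).aemeasurable
      filter_upwards [ae_lt_top' haem hfin] with y hy
      by_contra hcon
      rw [not_lt, top_le_iff] at hcon
      rw [hcon, ENNReal.top_rpow_of_pos (lt_of_le_of_ne hPnn (Ne.symm hP0))] at hy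
      exact absurd hy (lt_irrefl _)
  have hIIae : ∀ᵐ q ∂(Mr.prod Mr), q.1 ∈ I ∧ q.2 ∈ I := by
    refine (Measure.ae_prod_iff_ae_ae
      ((hImeas.preimage measurable_fst).inter (hImeas.preimage measurable_snd))).2 ?_
    filter_upwards [hIae] with x hx
    filter_upwards [hIae] with y hy
    exact ⟨hx, hy⟩
  -- truncations of h and a.e. convergence of the kernel integrals
  set hn : ℕ → ℝ → ℂ := fun n ξ => if ‖h ξ‖ ≤ n then h ξ else 0 with hhns
  have hhnm : ∀ n, Measurable (hn n) :=
    fun n => Measurable.ite (measurableSet_le hhm.norm measurable_const) hhm measurable_const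
  have hhnb : ∀ n : ℕ, ∃ C : ℝ, ∀ ξ, ‖hn n ξ‖ ≤ C := by
    intro n
    refine ⟨n, fun ξ => ?_⟩
    simp only [hhns]
    split_ifs with hc
    · exact hc
    · rw [norm_zero]; exact Nat.cast_nonneg n
  have hhnle : ∀ (n : ℕ) ξ, ‖hn n ξ‖ ≤ ‖h ξ‖ := by
    intro n ξ
    simp only [hhns]
    split_ifs with hc
    · exact le_rfl
    · rw [norm_zero]; exact norm_nonneg _
  have hhntend : ∀ ξ, Tendsto (fun n => hn n ξ) atTop (𝓝 (h ξ)) := by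
    intro ξ
    refine tendsto_atTop_of_eventually_const (i₀ := ⌈‖h ξ‖⌉₊) fun n hn' => ?_
    simp only [hhns]
    rw [if_pos (le_trans (Nat.le_ceil _) (Nat.cast_le.2 hn'))]
  have hΦtend : ∀ᵐ q ∂(Mr.prod Mr),
      Tendsto (fun n => ∫ ξ, hn n ξ ∂(ν q)) atTop (𝓝 (∫ ξ, h ξ ∂(ν q))) := by
    filter_upwards [hIIae, hKlt] with q hq hqK
    obtain ⟨x, y⟩ := q
    have hint : Integrable h (ν (x, y)) := by
      refine ⟨hhm.aestronglyMeasurable, ?_⟩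
      rw [hasFiniteIntegral_def]
      refine lt_of_eq_of_lt (hKeq x hq.1 y hq.2).symm ?_
      exact hqK
    exact tendsto_integral_of_dominated_convergence (fun ξ => ‖h ξ‖)
      (fun n => (hhnm n).aestronglyMeasurable) hint.norm
      (fun n => ae_of_all _ (hhnle n)) (ae_of_all _ hhntend)
  have hΦaem : AEMeasurable (fun q : ℝ × ℝ => ∫ ξ, h ξ ∂(ν q)) (Mr.prod Mr) :=
    aemeasurable_of_tendsto_metrizable_ae'
      (fun n => (hmeasC (hn n) (hhnm n) (hhnb n)).aemeasurable) hΦtend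
  -- the pointwise majorant F
  set F : ℝ → ℝ≥0∞ := fun x => ∫⁻ y, 𝒦 (x, y) * ‖g y‖₊ ∂Mr with hFdef
  have hFm : Measurable F :=
    Measurable.lintegral_prod_right' (h𝒦m.mul (hgm.enorm.comp measurable_snd))
  have hFbound : ∀ᵐ x ∂Mr, (∫⁻ y, ‖(∫ ξ, h ξ ∂(ν (x, y))) * g y‖₊ ∂Mr) ≤ F x := by
    filter_upwards [hIae] with x hx
    refine lintegral_mono_ae ?_
    filter_upwards [hIae] with y hy
    rw [nnnorm_mul, ENNReal.coe_mul]
    exact mul_le_mul_left (hdom x hx y hy) _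
  have hCC : ∀ᵐ x ∂Mr,
      (‖∫ y, (∫ ξ, h ξ ∂(ν (x, y))) * g y ∂Mr‖₊ : ℝ≥0∞) ≤ F x := by
    filter_upwards [hFbound] with x hx
    exact le_trans (enorm_integral_le_lintegral_enorm _) hx
  -- main case analysis
  have hmain : (∀ᵐ x ∂Mr, F x < ∞) ∧
      eLpNorm (fun x => ∫ y, (∫ ξ, h ξ ∂(ν (x, y))) * g y ∂Mr) s Mr ≤ A * Bg := by
    by_cases hstop : s = ∞
    · have hsinv : s⁻¹ = 0 := by rw [hstop, ENNReal.inv_top]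
      rw [hsinv, zero_add] at hs
      have hFtop : ∀ᵐ x ∂Mr, F x ≤ A * Bg := by
        by_cases hp₁t : p₁ = ∞
        · -- then p₂ = 1
          have hp₂1 : p₂ = 1 := by
            rw [hp₁t, ENNReal.inv_top, zero_add] at hs
            exact ENNReal.inv_eq_one.1 hs
          have hBg1 : Bg = ∫⁻ y, (‖g y‖₊ : ℝ≥0∞) ∂Mr := by
            rw [hBdef, hp₂1, eLpNorm_one_eq_lintegral_enorm]
            rfl
          filter_upwards [hIae] with x hx
          calc F x ≤ ∫⁻ y, A * ‖g y‖₊ ∂Mr := by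
                refine lintegral_mono_ae ?_
                filter_upwards [rowTop hp₁t x hx] with y hy
                exact mul_le_mul_left hy _
            _ = A * ∫⁻ y, (‖g y‖₊ : ℝ≥0∞) ∂Mr :=
                lintegral_const_mul'' A hgm.enorm.aemeasurable
            _ = A * Bg := by rw [hBg1]
        · by_cases hp₂t : p₂ = ∞
          · -- then p₁ = 1
            have hp₁1 : p₁ = 1 := by
              rw [hp₂t, ENNReal.inv_top, add_zero] at hs
              exact ENNReal.inv_eq_one.1 hs
            have hBgtop : Bg = essSup (fun y => (‖g y‖₊ : ℝ≥0∞)) Mr := by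
              rw [hBdef, hp₂t, eLpNorm_exponent_top]; rfl
            have hgae : ∀ᵐ y ∂Mr, (‖g y‖₊ : ℝ≥0∞) ≤ Bg := by
              rw [hBgtop]; exact ENNReal.ae_le_essSup _
            filter_upwards [hIae] with x hx
            calc F x ≤ ∫⁻ y, 𝒦 (x, y) * Bg ∂Mr := by
                  refine lintegral_mono_ae ?_
                  filter_upwards [hgae] with y hy
                  exact mul_le_mul_right hy _
              _ = (∫⁻ y, 𝒦 (x, y) ∂Mr) * Bg :=
                  lintegral_mul_const'' _ (h𝒦m.comp measurable_prodMk_left).aemeasurable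
              _ ≤ A * Bg := by
                  refine mul_le_mul_left ?_ _
                  have hrow := rowFin hp₁t x hx
                  rw [hp₁1] at hrow
                  simpa [ENNReal.toReal_one, ENNReal.rpow_one] using hrow
          · -- both finite, conjugate exponents
            have hP1 : 1 ≤ p₁.toReal := by
              rw [← ENNReal.toReal_one]
              exact (ENNReal.toReal_le_toReal ENNReal.one_ne_top hp₁t).2 hp₁
            have hP0' : p₁.toReal ≠ 0 := (lt_of_lt_of_le zero_lt_one hP1).ne'
            have hQpos : 0 < p₂.toReal := ENNReal.toReal_pos hp₂0 hp₂t
            have hinv : (p₁.toReal)⁻¹ + (p₂.toReal)⁻¹ = 1 := by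
              have h1 := congrArg ENNReal.toReal hs
              rw [ENNReal.toReal_add (ENNReal.inv_ne_top.2 hp₁0) (ENNReal.inv_ne_top.2 hp₂0),
                ENNReal.toReal_inv, ENNReal.toReal_inv, ENNReal.toReal_one] at h1
              exact h1
            have hconj : (p₁.toReal).HolderConjugate (p₂.toReal) := by
              rw [Real.holderConjugate_iff]; constructor
              · rcases lt_or_eq_of_le hP1 with hlt | heq
                · exact hlt
                · exfalso
                  rw [← heq, inv_one] at hinv
                  have h0 : (p₂.toReal)⁻¹ = 0 := by linarith
                  exact absurd h0 (ne_of_gt (inv_pos.2 hQpos))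
              · exact hinv
            filter_upwards [hIae] with x hx
            have hH := ENNReal.lintegral_mul_le_Lp_mul_Lq Mr hconj
              (f := fun y => 𝒦 (x, y)) (g := fun y => (‖g y‖₊ : ℝ≥0∞))
              ((h𝒦m.comp (measurable_prodMk_left (x := x))).aemeasurable)
              hgm.enorm.aemeasurable
            refine le_trans hH ?_
            have hgq : (∫⁻ y, (‖g y‖₊ : ℝ≥0∞) ^ p₂.toReal ∂Mr) ^ (1 / p₂.toReal) = Bg := by
              rw [hBdef, eLpNorm_eq_lintegral_rpow_enorm_toReal hp₂0 hp₂t]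
              rfl
            rw [hgq]
            refine mul_le_mul_left ?_ _
            have h1 := ENNReal.rpow_le_rpow (rowFin hp₁t x hx)
              (by positivity : (0:ℝ) ≤ 1 / p₁.toReal)
            rwa [← ENNReal.rpow_mul, mul_one_div_cancel hP0', ENNReal.rpow_one] at h1
      constructor
      · filter_upwards [hFtop] with x hx
        exact lt_of_le_of_lt hx (ENNReal.mul_lt_top hA hB)
      · rw [hstop, eLpNorm_exponent_top]
        refine essSup_le_of_ae_le _ ?_
        filter_upwards [hCC, hFtop] with x h1 h2
        exact le_trans h1 h2
    · -- s finite; then p₁ and p₂ are finite as well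
      have hp₁t : p₁ ≠ ∞ := by
        intro hcon
        rw [hcon, ENNReal.inv_top, zero_add] at hs
        have h1 : s⁻¹ + 1 ≤ 0 + 1 := by
          rw [zero_add, ← hs]; exact ENNReal.inv_le_one.2 hp₂
        have h3 : s⁻¹ = 0 :=
          le_antisymm ((ENNReal.add_le_add_iff_right ENNReal.one_ne_top).1 h1) zero_le
        exact hstop (by simpa using h3)
      have hp₂t : p₂ ≠ ∞ := by
        intro hcon
        rw [hcon, ENNReal.inv_top, add_zero] at hs
        have h1 : s⁻¹ + 1 ≤ 0 + 1 := by
          rw [zero_add, ← hs]; exact ENNReal.inv_le_one.2 hp₁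
        have h3 : s⁻¹ = 0 :=
          le_antisymm ((ENNReal.add_le_add_iff_right ENNReal.one_ne_top).1 h1) zero_le
        exact hstop (by simpa using h3)
      set P := p₁.toReal with hPdef
      set Q := p₂.toReal with hQdef
      set S := s.toReal with hSdef
      have hP1 : 1 ≤ P := by
        rw [hPdef, ← ENNReal.toReal_one]
        exact (ENNReal.toReal_le_toReal ENNReal.one_ne_top hp₁t).2 hp₁
      have hQ1 : 1 ≤ Q := by
        rw [hQdef, ← ENNReal.toReal_one]
        exact (ENNReal.toReal_le_toReal ENNReal.one_ne_top hp₂t).2 hp₂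
      have hP0 : (0:ℝ) < P := lt_of_lt_of_le zero_lt_one hP1
      have hQ0 : (0:ℝ) < Q := lt_of_lt_of_le zero_lt_one hQ1
      have hS0 : (0:ℝ) < S := ENNReal.toReal_pos hs0 hstop
      have hPQS : 1/P + 1/Q = 1/S + 1 := by
        have h1 := congrArg ENNReal.toReal hs
        rw [ENNReal.toReal_add (ENNReal.inv_ne_top.2 hp₁0) (ENNReal.inv_ne_top.2 hp₂0),
          ENNReal.toReal_add (ENNReal.inv_ne_top.2 hs0) ENNReal.one_ne_top,
          ENNReal.toReal_inv, ENNReal.toReal_inv, ENNReal.toReal_inv,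
          ENNReal.toReal_one] at h1
        simpa [one_div] using h1
      set e₁ : ℝ := 1/S with he₁def
      set e₂ : ℝ := 1/P - 1/S with he₂def
      set e₃ : ℝ := 1/Q - 1/S with he₃def
      have h1P : 1/P ≤ 1 := by rw [div_le_one hP0]; exact hP1
      have h1Q : 1/Q ≤ 1 := by rw [div_le_one hQ0]; exact hQ1
      have he₁ : 0 ≤ e₁ := by rw [he₁def]; positivity
      have he₂ : 0 ≤ e₂ := by rw [he₂def]; linarith
      have he₃ : 0 ≤ e₃ := by rw [he₃def]; linarith
      have hkey : ∀ z w : ℝ≥0∞, z * w = (z^P * w^Q) ^ e₁ * (z^P) ^ e₂ * (w^Q) ^ e₃ := by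
        intro z w
        rw [ENNReal.mul_rpow_of_nonneg _ _ he₁]
        rw [show (z^P)^e₁ * (w^Q)^e₁ * (z^P)^e₂ * (w^Q)^e₃
            = ((z^P)^e₁ * (z^P)^e₂) * ((w^Q)^e₁ * (w^Q)^e₃) by ring]
        rw [← ENNReal.rpow_add_of_nonneg _ _ he₁ he₂,
          ← ENNReal.rpow_add_of_nonneg _ _ he₁ he₃,
          ← ENNReal.rpow_mul, ← ENNReal.rpow_mul,
          show P * (e₁ + e₂) = 1 by rw [he₁def, he₂def]; field_simp; ring,
          show Q * (e₁ + e₃) = 1 by rw [he₁def, he₃def]; field_simp; ring,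
          ENNReal.rpow_one, ENNReal.rpow_one]
      have hgq : ∫⁻ y, (‖g y‖₊ : ℝ≥0∞) ^ Q ∂Mr = Bg ^ Q := by
        have hq : Bg = (∫⁻ y, (‖g y‖₊ : ℝ≥0∞) ^ Q ∂Mr) ^ (1/Q) := by
          rw [hBdef, eLpNorm_eq_lintegral_rpow_enorm_toReal hp₂0 hp₂t]
          rfl
        rw [hq, ← ENNReal.rpow_mul, one_div, inv_mul_cancel₀ hQ0.ne', ENNReal.rpow_one]
      have hKsec : ∀ x : ℝ, Measurable fun y => 𝒦 (x, y) :=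
        fun x => h𝒦m.comp (measurable_prodMk_left (x := x))
      have holder : ∀ x : ℝ,
          F x ≤ (∫⁻ y, 𝒦 (x,y)^P * (‖g y‖₊ : ℝ≥0∞)^Q ∂Mr) ^ e₁ *
            (∫⁻ y, 𝒦 (x,y)^P ∂Mr) ^ e₂ * (∫⁻ y, (‖g y‖₊ : ℝ≥0∞)^Q ∂Mr) ^ e₃ := by
        intro x
        have heq : F x = ∫⁻ y,
            (𝒦 (x,y)^P * (‖g y‖₊ : ℝ≥0∞)^Q)^e₁ * (𝒦 (x,y)^P)^e₂ * ((‖g y‖₊ : ℝ≥0∞)^Q)^e₃ ∂Mr :=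
          lintegral_congr fun y => hkey _ _
        rw [heq]
        exact s19_holder3
          (((ENNReal.continuous_rpow_const.measurable.comp (hKsec x)).mul
            (ENNReal.continuous_rpow_const.measurable.comp hgm.enorm)).aemeasurable)
          ((ENNReal.continuous_rpow_const.measurable.comp (hKsec x)).aemeasurable)
          ((ENNReal.continuous_rpow_const.measurable.comp hgm.enorm).aemeasurable)
          he₁ he₂ he₃ (by rw [he₁def, he₂def, he₃def]; linarith)
      have hW : ∫⁻ x, (∫⁻ y, 𝒦 (x,y)^P * (‖g y‖₊ : ℝ≥0∞)^Q ∂Mr) ∂Mr ≤ A^P * Bg^Q := by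
        rw [lintegral_lintegral_swap
          (((ENNReal.continuous_rpow_const.measurable.comp h𝒦m).mul
            (ENNReal.continuous_rpow_const.measurable.comp
              (hgm.enorm.comp measurable_snd))).aemeasurable)]
        calc ∫⁻ y, ∫⁻ x, 𝒦 (x,y)^P * (‖g y‖₊ : ℝ≥0∞)^Q ∂Mr ∂Mr
            = ∫⁻ y, (∫⁻ x, 𝒦 (x,y)^P ∂Mr) * (‖g y‖₊ : ℝ≥0∞)^Q ∂Mr := by
              refine lintegral_congr fun y => ?_
              exact lintegral_mul_const'' _
                ((ENNReal.continuous_rpow_const.measurable.comp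
                  (h𝒦m.comp (measurable_id.prodMk measurable_const))).aemeasurable)
          _ ≤ ∫⁻ y, A^P * (‖g y‖₊ : ℝ≥0∞)^Q ∂Mr := by
              refine lintegral_mono_ae ?_
              filter_upwards [hIae] with y hy
              exact mul_le_mul_left (colFin hp₁t y hy) _
          _ = A^P * ∫⁻ y, (‖g y‖₊ : ℝ≥0∞)^Q ∂Mr :=
              lintegral_const_mul'' _
                (ENNReal.continuous_rpow_const.measurable.comp hgm.enorm).aemeasurable
          _ = A^P * Bg^Q := by rw [hgq]
      have hstep : ∀ᵐ x ∂Mr, F x ^ S ≤ (∫⁻ y, 𝒦 (x,y)^P * (‖g y‖₊ : ℝ≥0∞)^Q ∂Mr)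
          * ((A^P) ^ (e₂*S) * (Bg^Q) ^ (e₃*S)) := by
        filter_upwards [hIae] with x hx
        have h3 : F x ≤ (∫⁻ y, 𝒦 (x,y)^P * (‖g y‖₊ : ℝ≥0∞)^Q ∂Mr)^e₁ * (A^P)^e₂ * (Bg^Q)^e₃ := by
          refine le_trans (holder x) ?_
          rw [hgq]
          exact mul_le_mul_left
            (mul_le_mul_right (ENNReal.rpow_le_rpow (rowFin hp₁t x hx) he₂) _) _
        calc F x ^ S
            ≤ ((∫⁻ y, 𝒦 (x,y)^P * (‖g y‖₊ : ℝ≥0∞)^Q ∂Mr)^e₁ * (A^P)^e₂ * (Bg^Q)^e₃) ^ S :=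
              ENNReal.rpow_le_rpow h3 hS0.le
          _ = _ := by
              rw [ENNReal.mul_rpow_of_nonneg _ _ hS0.le, ENNReal.mul_rpow_of_nonneg _ _ hS0.le,
                ← ENNReal.rpow_mul, ← ENNReal.rpow_mul, ← ENNReal.rpow_mul,
                show e₁ * S = 1 by rw [he₁def]; field_simp, ENNReal.rpow_one, mul_assoc,
                ← ENNReal.rpow_mul (Bg ^ Q) e₃ S]
      have hSint : ∫⁻ x, F x ^ S ∂Mr ≤ (A * Bg) ^ S := by
        calc ∫⁻ x, F x ^ S ∂Mr
            ≤ ∫⁻ x, (∫⁻ y, 𝒦 (x,y)^P * (‖g y‖₊ : ℝ≥0∞)^Q ∂Mr)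
                * ((A^P) ^ (e₂*S) * (Bg^Q) ^ (e₃*S)) ∂Mr := lintegral_mono_ae hstep
          _ = (∫⁻ x, (∫⁻ y, 𝒦 (x,y)^P * (‖g y‖₊ : ℝ≥0∞)^Q ∂Mr) ∂Mr)
                * ((A^P) ^ (e₂*S) * (Bg^Q) ^ (e₃*S)) :=
              lintegral_mul_const'' _
                (Measurable.lintegral_prod_right'
                  ((ENNReal.continuous_rpow_const.measurable.comp h𝒦m).mul
                    (ENNReal.continuous_rpow_const.measurable.comp
                      (hgm.enorm.comp measurable_snd)))).aemeasurable
          _ ≤ (A^P * Bg^Q) * ((A^P) ^ (e₂*S) * (Bg^Q) ^ (e₃*S)) := mul_le_mul_left hW _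
          _ = (A^P) ^ (1 + e₂*S) * (Bg^Q) ^ (1 + e₃*S) := by
              rw [ENNReal.rpow_add_of_nonneg _ _ zero_le_one (mul_nonneg he₂ hS0.le),
                ENNReal.rpow_add_of_nonneg _ _ zero_le_one (mul_nonneg he₃ hS0.le),
                ENNReal.rpow_one, ENNReal.rpow_one]
              ring
          _ = A ^ S * Bg ^ S := by
              rw [← ENNReal.rpow_mul, ← ENNReal.rpow_mul,
                show P * (1 + e₂*S) = S by rw [he₂def]; field_simp; ring,
                show Q * (1 + e₃*S) = S by rw [he₃def]; field_simp; ring]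
          _ = (A * Bg) ^ S := (ENNReal.mul_rpow_of_nonneg _ _ hS0.le).symm
      have hABS : (A * Bg) ^ S ≠ ∞ :=
        (ENNReal.rpow_lt_top_of_nonneg hS0.le (ENNReal.mul_lt_top hA hB).ne).ne
      have hFv : ∀ᵐ x ∂Mr, F x < ∞ := by
        have hae := ae_lt_top' (f := fun x => F x ^ S)
          ((ENNReal.continuous_rpow_const.measurable.comp hFm).aemeasurable)
          (lt_of_le_of_lt hSint (lt_top_iff_ne_top.2 hABS)).ne
        filter_upwards [hae] with x hx
        by_contra hcon
        rw [not_lt, top_le_iff] at hcon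
        rw [hcon, ENNReal.top_rpow_of_pos hS0] at hx
        exact absurd hx (lt_irrefl _)
      refine ⟨hFv, ?_⟩
      rw [eLpNorm_eq_lintegral_rpow_enorm_toReal hs0 hstop]
      have hle : ∫⁻ x, (‖∫ y, (∫ ξ, h ξ ∂(ν (x, y))) * g y ∂Mr‖₊ : ℝ≥0∞) ^ S ∂Mr
          ≤ (A*Bg)^S := by
        refine le_trans (lintegral_mono_ae ?_) hSint
        filter_upwards [hCC] with x hx
        exact ENNReal.rpow_le_rpow hx hS0.le
      refine le_trans (ENNReal.rpow_le_rpow hle (by positivity)) (le_of_eq ?_)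
      rw [← ENNReal.rpow_mul, mul_one_div_cancel hS0.ne', ENNReal.rpow_one]
  rcases hmain with ⟨hFfin, hFs⟩
  refine ⟨?_, hFs⟩
  filter_upwards [hFfin, hFbound, Measure.ae_ae_of_ae_prod hΦaem.ae_eq_mk] with x hF hFb hsec
  refine ⟨?_, ?_⟩
  · have haem : AEMeasurable (fun y => ∫ ξ, h ξ ∂(ν (x, y))) Mr :=
      ⟨fun y => hΦaem.mk _ (x, y), hΦaem.measurable_mk.comp measurable_prodMk_left, hsec⟩
    exact (haem.mul hgm.aemeasurable).aestronglyMeasurable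
  · rw [hasFiniteIntegral_def]
    exact lt_of_le_of_lt hFb hF
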